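/- Let C : (0,∞) → ℝ be nonincreasing with C_a ≤ 0 for all a > 0, and suppose there exist a > 0 and δ > 0 with C_a < 0 such that C_{(1+t)c} ≤ (1+t) C_c for all t ∈ [0,δ) and all c ∈ [a, λa], where λ > 1. Then C_{λa} ≤ λ C_a. -/
import Mathlib


theorem stmt_4 (C : ℝ → ℝ)
    (hmono : ∀ a b : ℝ, 0 < a → a ≤ b → C b ≤ C a)
    (hnonpos : ∀ a : ℝ, 0 < a → C a ≤ 0)
    (a δ lam : ℝ) (ha : 0 < a) (hδ : 0 < δ) (hCa : C a < 0) (hlam : 1 < lam)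
    (hloc : ∀ t c : ℝ, 0 ≤ t → t < δ → a ≤ c → c ≤ lam * a →
      C ((1 + t) * c) ≤ (1 + t) * C c) :
    C (lam * a) ≤ lam * C a := by
  classical
  set t₀ : ℝ := δ / 2 with ht₀def
  have ht₀ : 0 < t₀ := by positivity
  have ht₀δ : t₀ < δ := by simp only [ht₀def]; linarith
  have hb : (1:ℝ) < 1 + t₀ := by linarith
  have key : ∀ k : ℕ, (1+t₀)^k ≤ lam → C ((1+t₀)^k * a) ≤ (1+t₀)^k * C a := by
    intro k
    induction k with
    | zero => simp
    | succ k ih =>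
      intro hk
      have hmonopow : (1+t₀)^k ≤ (1+t₀)^(k+1) :=
        pow_le_pow_right₀ hb.le (Nat.le_succ k)
      have hk' : (1+t₀)^k ≤ lam := le_trans hmonopow hk
      have h1 : (1:ℝ) ≤ (1+t₀)^k := one_le_pow₀ hb.le
      have hca : a ≤ (1+t₀)^k * a := le_mul_of_one_le_left ha.le h1
      have hcla : (1+t₀)^k * a ≤ lam * a := mul_le_mul_of_nonneg_right hk' ha.le
      have h2 := hloc t₀ ((1+t₀)^k * a) ht₀.le ht₀δ hca hcla
      have h3 : (1+t₀) * C ((1+t₀)^k * a) ≤ (1+t₀) * ((1+t₀)^k * C a) :=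
        mul_le_mul_of_nonneg_left (ih hk') (by linarith)
      calc C ((1+t₀)^(k+1) * a) = C ((1+t₀) * ((1+t₀)^k * a)) := by ring_nf
        _ ≤ (1+t₀) * C ((1+t₀)^k * a) := h2
        _ ≤ (1+t₀) * ((1+t₀)^k * C a) := h3
        _ = (1+t₀)^(k+1) * C a := by ring
  have hex : ∃ k : ℕ, lam < (1+t₀)^k := pow_unbounded_of_one_lt lam hb
  set n := Nat.find hex with hndef
  have hn : lam < (1+t₀)^n := Nat.find_spec hex
  have hnpos : n ≠ 0 := by
    intro h
    rw [h] at hn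
    simp at hn
    linarith
  obtain ⟨m, hm⟩ : ∃ m, n = m + 1 := ⟨n - 1, (Nat.succ_pred_eq_of_pos (Nat.pos_of_ne_zero hnpos)).symm⟩
  have hm1 : (1+t₀)^m ≤ lam := by
    by_contra h
    push_neg at h
    have := Nat.find_min hex (show m < n by omega) h
    exact this
  have hm2 : lam < (1+t₀)^(m+1) := hm ▸ hn
  have hpm : (0:ℝ) < (1+t₀)^m := by positivity
  set s : ℝ := lam / (1+t₀)^m with hsdef
  have hs1 : (1:ℝ) ≤ s := (one_le_div hpm).mpr hm1
  have hs2 : s < 1 + t₀ := by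
    rw [hsdef, div_lt_iff₀ hpm]
    calc lam < (1+t₀)^(m+1) := hm2
      _ = (1+t₀) * (1+t₀)^m := by ring
  have hslam : s * (1+t₀)^m = lam := div_mul_cancel₀ lam hpm.ne'
  have h1 : (1:ℝ) ≤ (1+t₀)^m := one_le_pow₀ hb.le
  have hca : a ≤ (1+t₀)^m * a := le_mul_of_one_le_left ha.le h1
  have hcla : (1+t₀)^m * a ≤ lam * a := mul_le_mul_of_nonneg_right hm1 ha.le
  have h2 := hloc (s - 1) ((1+t₀)^m * a) (by linarith) (by linarith) hca hcla
  have h3 : s * C ((1+t₀)^m * a) ≤ s * ((1+t₀)^m * C a) :=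
    mul_le_mul_of_nonneg_left (key m hm1) (by linarith)
  calc C (lam * a) = C ((1 + (s - 1)) * ((1+t₀)^m * a)) := by
        rw [show (1 + (s - 1)) * ((1+t₀)^m * a) = s * (1+t₀)^m * a by ring, hslam]
    _ ≤ (1 + (s - 1)) * C ((1+t₀)^m * a) := h2
    _ = s * C ((1+t₀)^m * a) := by ring
    _ ≤ s * ((1+t₀)^m * C a) := h3
    _ = s * (1+t₀)^m * C a := by ring
    _ = lam * C a := by rw [hslam]
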